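/- Suppose f' : {0,1}^{2n-1} → {0,1} is monotone with Φ_{f'}(1) ≥ λ ≥ 1/n, and g is the minor of f' with respect to a uniformly random pairing map π₂ : [2n-1] → [n] (π₂(1)=1, remaining coordinates paired uniformly at random). Then there exists γ = γ(λ) > 0 such that E_{π₂}[Φ_g(1)] ≥ γ. -/

import Mathlib

open Finset

/-- A Boolean function on subsets of `Fin m` is monotone. -/
def MonotoneB {m : ℕ} (f : Finset (Fin m) → Bool) : Prop :=
  ∀ S T : Finset (Fin m), S ⊆ T → f S = true → f T = true

/-- The boundary of coordinate `i`: sets `S` not containing `i` with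
`f (S ∪ {i}) = 1` and `f S = 0`. -/
def boundary {m : ℕ} (f : Finset (Fin m) → Bool) (i : Fin m) : Finset (Finset (Fin m)) :=
  Finset.univ.filter (fun S => i ∉ S ∧ f (insert i S) = true ∧ f S = false)

/-- `mu f i j` : the fraction of size-`j` subsets of `[m] \ {i}` lying in the
boundary of coordinate `i`. -/
def mu {m : ℕ} (f : Finset (Fin m) → Bool) (i : Fin m) (j : ℕ) : ℚ :=
  (((boundary f i).filter (fun S => S.card = j)).card : ℚ) / (((m - 1).choose j : ℕ) : ℚ)

/-- The Shapley value of coordinate `i` of `f` : the probability over a uniformly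
random permutation `σ` that `i` is the pivotal coordinate on the increasing path
`∅ = P₀ ⊂ P₁ ⊂ ⋯ ⊂ Pₘ = univ` given by `σ`. -/
def shapley {m : ℕ} (f : Finset (Fin m) → Bool) (i : Fin m) : ℚ :=
  (((Finset.univ : Finset (Equiv.Perm (Fin m))).filter (fun σ =>
    ∃ j : Fin m, σ j = i ∧
      f ((Finset.univ.filter (fun k => k < j)).image (fun k => σ k)) = false ∧
      f ((Finset.univ.filter (fun k => k ≤ j)).image (fun k => σ k)) = true)).card : ℚ)
    / ((Nat.factorial m : ℕ) : ℚ)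

/-- `g` is the minor of `f` with respect to `π`. -/
def minorOf {m k : ℕ} (g : Finset (Fin k) → Bool) (f : Finset (Fin m) → Bool)
    (π : Fin m → Fin k) : Prop :=
  ∀ S : Finset (Fin k), g S = f (Finset.univ.filter (fun i => π i ∈ S))

/-- The minor of `f` with respect to `π`, as a function. -/
def minorFun {m k : ℕ} (f : Finset (Fin m) → Bool) (π : Fin m → Fin k) :
    Finset (Fin k) → Bool :=
  fun S => f (Finset.univ.filter (fun i => π i ∈ S))

/-- The set of "pairing" maps `π₂ : [2n-1] → [n]` with `π₂(1) = 1` and the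
remaining `2n-2` elements partitioned into `n-1` pairs. -/
def pairingMaps (n : ℕ) (hn : 0 < n) : Finset (Fin (2*n-1) → Fin n) :=
  Finset.univ.filter (fun π => π ⟨0, by omega⟩ = ⟨0, hn⟩ ∧
    ∀ i : Fin n, i.val ≠ 0 → (Finset.univ.filter (fun j => π j = i)).card = 2)



variable {α : Type*} [Fintype α] [DecidableEq α]

lemma exists_perm_mem_iff (s t : Finset α) (h : s.card = t.card) :
    ∃ ρ : Equiv.Perm α, ∀ x, x ∈ s ↔ ρ x ∈ t := by
  classical
  have h1 : Fintype.card {x // x ∈ s} = Fintype.card {x // x ∈ t} := by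
    simp [Fintype.card_coe, h]
  have h2 : Fintype.card {x // ¬ x ∈ s} = Fintype.card {x // ¬ x ∈ t} := by
    have := Fintype.card_subtype_compl (fun x => x ∈ s)
    have ht := Fintype.card_subtype_compl (fun x => x ∈ t)
    simp only [Fintype.card_coe] at *
    omega
  let e1 := Fintype.equivOfCardEq h1
  let e2 := Fintype.equivOfCardEq h2
  refine ⟨(Equiv.sumCompl (· ∈ s)).symm.trans ((e1.sumCongr e2).trans
    (Equiv.sumCompl (· ∈ t))), fun x => ?_⟩
  by_cases hx : x ∈ s
  · simp only [Equiv.trans_apply, Equiv.sumCompl_symm_apply_of_pos hx,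
      Equiv.sumCongr_apply, Sum.map_inl, Equiv.sumCompl_apply_inl]
    exact ⟨fun _ => (e1 ⟨x, hx⟩).2, fun _ => hx⟩
  · simp only [Equiv.trans_apply, Equiv.sumCompl_symm_apply_of_neg hx,
      Equiv.sumCongr_apply, Sum.map_inr, Equiv.sumCompl_apply_inr]
    exact ⟨fun hc => absurd hc hx, fun hc => absurd hc (e2 ⟨x, hx⟩).2⟩

lemma exists_perm_fix_mem_iff (i : α) (s t : Finset α) (hs : i ∉ s) (ht : i ∉ t)
    (h : s.card = t.card) :
    ∃ ρ : Equiv.Perm α, ρ i = i ∧ ∀ x, x ∈ s ↔ ρ x ∈ t := by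
  classical
  obtain ⟨ρ', hρ'⟩ := exists_perm_mem_iff (α := {x : α // x ≠ i})
    (s.subtype (· ≠ i)) (t.subtype (· ≠ i)) (by
      rw [Finset.card_subtype, Finset.card_subtype,
        Finset.filter_eq_self.2, Finset.filter_eq_self.2, h]
      · intro x hx; exact fun he => ht (he ▸ hx)
      · intro x hx; exact fun he => hs (he ▸ hx))
  refine ⟨ρ'.extendDomain (Equiv.refl _), ?_, fun x => ?_⟩
  · exact Equiv.Perm.extendDomain_apply_not_subtype _ _ (by simp)
  · by_cases hx : x = i
    · subst hx
      rw [Equiv.Perm.extendDomain_apply_not_subtype _ _ (by simp)]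
      exact ⟨fun hc => absurd hc hs, fun hc => absurd hc ht⟩
    · have hext : (ρ'.extendDomain (Equiv.refl {x : α // x ≠ i})) x
          = ((ρ' ⟨x, hx⟩ : {x : α // x ≠ i}) : α) := by
        have := Equiv.Perm.extendDomain_apply_subtype ρ'
          (Equiv.refl {x : α // x ≠ i}) (b := x) hx
        simpa using this
      rw [hext]
      have := hρ' ⟨x, hx⟩
      simp only [Finset.mem_subtype] at this
      simpa using this


section ShapleyFormula

def pivotSet {m : ℕ} (i : Fin m) (σ : Equiv.Perm (Fin m)) : Finset (Fin m) :=
  (Finset.univ.filter (fun k => k < σ.symm i)).image (fun k => σ k)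

lemma card_filter_lt {m : ℕ} (p : Fin m) :
    #(Finset.univ.filter (fun k : Fin m => k < p)) = p.val := by
  rw [show (Finset.univ.filter (fun k : Fin m => k < p)) = Finset.Iio p by ext; simp,
    Fin.card_Iio]

lemma pivotSet_card {m : ℕ} (i : Fin m) (σ : Equiv.Perm (Fin m)) :
    (pivotSet i σ).card = (σ.symm i).val := by
  rw [pivotSet, Finset.card_image_of_injective _ σ.injective, card_filter_lt]

lemma pivotSet_not_mem {m : ℕ} (i : Fin m) (σ : Equiv.Perm (Fin m)) :
    i ∉ pivotSet i σ := by
  rw [pivotSet]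
  simp only [Finset.mem_image, Finset.mem_filter, Finset.mem_univ, true_and]
  rintro ⟨k, hk, rfl⟩
  rw [Equiv.symm_apply_apply] at hk
  exact lt_irrefl _ hk

lemma pivotSet_subset {m : ℕ} (i : Fin m) (σ : Equiv.Perm (Fin m)) :
    pivotSet i σ ⊆ Finset.univ.erase i := fun x hx =>
  Finset.mem_erase.2 ⟨fun h => pivotSet_not_mem i σ (h ▸ hx), Finset.mem_univ x⟩

lemma insert_pivotSet {m : ℕ} (i : Fin m) (σ : Equiv.Perm (Fin m)) :
    (Finset.univ.filter (fun k => k ≤ σ.symm i)).image (fun k => σ k)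
      = insert i (pivotSet i σ) := by
  have h : (Finset.univ.filter (fun k => k ≤ σ.symm i))
      = insert (σ.symm i) (Finset.univ.filter (fun k => k < σ.symm i)) := by
    ext k
    simp only [Finset.mem_filter, Finset.mem_univ, true_and, Finset.mem_insert]
    constructor
    · intro h; rcases eq_or_lt_of_le h with h | h
      · exact Or.inl h
      · exact Or.inr h
    · rintro (rfl | h); · exact le_refl _
      · exact le_of_lt h
  rw [pivotSet, h, Finset.image_insert, Equiv.apply_symm_apply]

lemma pivotal_iff {m : ℕ} (f : Finset (Fin m) → Bool) (i : Fin m) (σ : Equiv.Perm (Fin m)) :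
    (∃ j : Fin m, σ j = i ∧
      f ((Finset.univ.filter (fun k => k < j)).image (fun k => σ k)) = false ∧
      f ((Finset.univ.filter (fun k => k ≤ j)).image (fun k => σ k)) = true)
    ↔ pivotSet i σ ∈ boundary f i := by
  constructor
  · rintro ⟨j, rfl, h1, h2⟩
    have hj : (Equiv.symm σ) (σ j) = j := σ.symm_apply_apply j
    rw [boundary, Finset.mem_filter]
    refine ⟨Finset.mem_univ _, pivotSet_not_mem _ _, ?_, ?_⟩
    · rw [← insert_pivotSet]; simp only [hj]; exact h2
    · rw [pivotSet]; simp only [hj]; exact h1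
  · intro h
    rw [boundary, Finset.mem_filter] at h
    refine ⟨σ.symm i, Equiv.apply_symm_apply _ _, h.2.2.2, ?_⟩
    rw [insert_pivotSet]; exact h.2.2.1

lemma pivotSet_mul {m : ℕ} (i : Fin m) (ρ σ : Equiv.Perm (Fin m)) (hρ : ρ i = i) :
    pivotSet i (ρ * σ) = (pivotSet i σ).image ρ := by
  have hρs : ρ.symm i = i := by
    rw [← hρ, Equiv.symm_apply_apply, hρ]
  rw [pivotSet, pivotSet, Finset.image_image]
  have h2 : (ρ * σ).symm i = σ.symm i := by
    rw [Equiv.symm_apply_eq, Equiv.Perm.mul_apply, Equiv.apply_symm_apply, hρ]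
  rw [h2]
  exact Finset.image_congr (fun x _ => rfl)


def fib {m : ℕ} (i : Fin m) (S : Finset (Fin m)) : ℕ :=
  #(Finset.univ.filter (fun σ : Equiv.Perm (Fin m) => pivotSet i σ = S))

lemma fib_const {m : ℕ} (i : Fin m) (S T : Finset (Fin m)) (hS : i ∉ S) (hT : i ∉ T)
    (hc : S.card = T.card) : fib i S = fib i T := by
  classical
  obtain ⟨ρ, hρi, hρ⟩ := exists_perm_fix_mem_iff i S T hS hT hc
  have himg : S.image ρ = T := by
    apply Finset.eq_of_subset_of_card_le
    · intro x hx
      obtain ⟨y, hy, rfl⟩ := Finset.mem_image.1 hx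
      exact (hρ y).1 hy
    · rw [Finset.card_image_of_injective _ ρ.injective, hc]
  have hρinv : ρ⁻¹ i = i := by
    rw [Equiv.Perm.inv_def, Equiv.symm_apply_eq]; exact hρi.symm
  apply Finset.card_nbij' (fun σ => ρ * σ) (fun τ => ρ⁻¹ * τ)
  · intro σ hσ
    rw [Finset.mem_coe, Finset.mem_filter] at hσ ⊢
    refine ⟨Finset.mem_univ _, ?_⟩
    rw [pivotSet_mul i ρ σ hρi, hσ.2, himg]
  · intro τ hτ
    rw [Finset.mem_coe, Finset.mem_filter] at hτ ⊢
    refine ⟨Finset.mem_univ _, ?_⟩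
    rw [pivotSet_mul i ρ⁻¹ τ hρinv, hτ.2, ← himg, Finset.image_image]
    have : ∀ x ∈ S, (⇑ρ⁻¹ ∘ ⇑ρ) x = x := fun x _ => ρ.symm_apply_apply x
    rw [Finset.image_congr this, Finset.image_id']
  · intro σ _; group
  · intro τ _; group

lemma swap_symm_eq {m : ℕ} (i p q : Fin m) (σ : Equiv.Perm (Fin m)) :
    (σ * Equiv.swap p q).symm i = Equiv.swap p q (σ.symm i) := by
  rw [Equiv.symm_apply_eq, Equiv.Perm.mul_apply, Equiv.swap_apply_self,
    Equiv.apply_symm_apply]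

lemma posfiber_card {m : ℕ} (i : Fin m) (p : Fin m) :
    #(Finset.univ.filter (fun σ : Equiv.Perm (Fin m) => σ.symm i = p))
      * m = Nat.factorial m := by
  classical
  have hconst : ∀ p q : Fin m,
      #(Finset.univ.filter (fun σ : Equiv.Perm (Fin m) => σ.symm i = p))
        = #(Finset.univ.filter (fun σ : Equiv.Perm (Fin m) => σ.symm i = q)) := by
    intro p q
    apply Finset.card_nbij' (fun σ => σ * Equiv.swap p q) (fun σ => σ * Equiv.swap p q)
    · intro σ hσ
      rw [Finset.mem_coe, Finset.mem_filter] at hσ ⊢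
      rw [swap_symm_eq, hσ.2, Equiv.swap_apply_left]
      exact ⟨Finset.mem_univ _, rfl⟩
    · intro σ hσ
      rw [Finset.mem_coe, Finset.mem_filter] at hσ ⊢
      rw [swap_symm_eq, hσ.2, Equiv.swap_apply_right]
      exact ⟨Finset.mem_univ _, rfl⟩
    · intro σ _; dsimp only; rw [mul_assoc, Equiv.swap_mul_self, mul_one]
    · intro σ _; dsimp only; rw [mul_assoc, Equiv.swap_mul_self, mul_one]
  have htot : ∑ q : Fin m,
      #(Finset.univ.filter (fun σ : Equiv.Perm (Fin m) => σ.symm i = q))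
        = Nat.factorial m := by
    rw [← Finset.card_eq_sum_card_fiberwise
      (f := fun σ : Equiv.Perm (Fin m) => σ.symm i) (fun σ _ => Finset.mem_univ _)]
    rw [Finset.card_univ, Fintype.card_perm, Fintype.card_fin]
  calc #(Finset.univ.filter (fun σ : Equiv.Perm (Fin m) => σ.symm i = p)) * m
      = ∑ _q : Fin m,
        #(Finset.univ.filter (fun σ : Equiv.Perm (Fin m) => σ.symm i = p)) := by
        rw [Finset.sum_const, Finset.card_univ, Fintype.card_fin, smul_eq_mul, mul_comm]
    _ = ∑ q : Fin m,
        #(Finset.univ.filter (fun σ : Equiv.Perm (Fin m) => σ.symm i = q)) :=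
        Finset.sum_congr rfl (fun q _ => hconst p q)
    _ = Nat.factorial m := htot


def levelSet {m : ℕ} (i : Fin m) (j : ℕ) : Finset (Finset (Fin m)) :=
  Finset.powersetCard j (Finset.univ.erase i)

lemma mem_levelSet {m : ℕ} {i : Fin m} {j : ℕ} {S : Finset (Fin m)} :
    S ∈ levelSet i j ↔ (i ∉ S ∧ S.card = j) := by
  rw [levelSet, Finset.mem_powersetCard]
  constructor
  · rintro ⟨h1, h2⟩
    exact ⟨fun hi => (Finset.mem_erase.1 (h1 hi)).1 rfl, h2⟩
  · rintro ⟨h1, h2⟩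
    exact ⟨fun x hx => Finset.mem_erase.2 ⟨fun he => h1 (he ▸ hx), Finset.mem_univ x⟩, h2⟩

lemma levelSet_card {m : ℕ} (i : Fin m) (j : ℕ) :
    #(levelSet i j) = (m-1).choose j := by
  rw [levelSet, Finset.card_powersetCard, Finset.card_erase_of_mem (Finset.mem_univ i),
    Finset.card_univ, Fintype.card_fin]

lemma pivotSet_mem_levelSet {m : ℕ} (i : Fin m) (σ : Equiv.Perm (Fin m)) :
    pivotSet i σ ∈ levelSet i ((σ.symm i).val) :=
  mem_levelSet.2 ⟨pivotSet_not_mem i σ, pivotSet_card i σ⟩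

lemma fiber_sum {m : ℕ} (i : Fin m) (j : ℕ) (hj : j < m) :
    ∑ S ∈ levelSet i j, fib i S
      = #(Finset.univ.filter (fun σ : Equiv.Perm (Fin m) => σ.symm i = ⟨j, hj⟩)) := by
  classical
  rw [Finset.card_eq_sum_card_fiberwise (f := pivotSet i) (t := levelSet i j)
    (fun σ hσ => by
      have := (Finset.mem_filter.1 hσ).2
      have h2 := pivotSet_mem_levelSet i σ
      rw [this] at h2
      exact h2)]
  apply Finset.sum_congr rfl
  intro S hS
  rw [fib]
  congr 1
  ext σ
  simp only [Finset.mem_filter, Finset.mem_univ, true_and]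
  constructor
  · intro h2
    refine ⟨?_, h2⟩
    have hc := pivotSet_card i σ
    rw [h2, (mem_levelSet.1 hS).2] at hc
    exact Fin.ext hc.symm
  · rintro ⟨h1, h2⟩; exact h2

lemma fib_mul {m : ℕ} (i : Fin m) (j : ℕ) (hj : j < m) (S : Finset (Fin m))
    (hS : S ∈ levelSet i j) :
    fib i S * ((m-1).choose j * m) = Nat.factorial m := by
  have hconst : ∀ T ∈ levelSet i j, fib i T = fib i S := by
    intro T hT
    have h1 := mem_levelSet.1 hT
    have h2 := mem_levelSet.1 hS
    exact fib_const i T S h1.1 h2.1 (by rw [h1.2, h2.2])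
  have hsum : ∑ T ∈ levelSet i j, fib i T = (m-1).choose j * fib i S := by
    rw [Finset.sum_congr rfl hconst, Finset.sum_const, smul_eq_mul, levelSet_card]
  have := posfiber_card i (⟨j, hj⟩ : Fin m)
  rw [← fiber_sum i j hj, hsum] at this
  rw [← this]; ring

theorem shapley_eq {m : ℕ} (f : Finset (Fin m) → Bool) (i : Fin m) :
    shapley f i = (∑ j ∈ Finset.range m, mu f i j) / m := by
  classical
  have hm : 0 < m := i.pos
  have h0 : (Finset.univ.filter (fun σ : Equiv.Perm (Fin m) =>
      ∃ j : Fin m, σ j = i ∧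
        f ((Finset.univ.filter (fun k => k < j)).image (fun k => σ k)) = false ∧
        f ((Finset.univ.filter (fun k => k ≤ j)).image (fun k => σ k)) = true))
      = Finset.univ.filter (fun σ => pivotSet i σ ∈ boundary f i) :=
    Finset.filter_congr (fun σ _ => pivotal_iff f i σ)
  have hN : #(Finset.univ.filter (fun σ : Equiv.Perm (Fin m) =>
      pivotSet i σ ∈ boundary f i)) = ∑ S ∈ boundary f i, fib i S := by
    rw [Finset.card_eq_sum_card_fiberwise (f := pivotSet i) (t := boundary f i)
      (s := Finset.univ.filter (fun σ : Equiv.Perm (Fin m) => pivotSet i σ ∈ boundary f i))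
      (fun σ hσ => (Finset.mem_filter.1 hσ).2)]
    apply Finset.sum_congr rfl
    intro S hS
    rw [fib]
    congr 1
    ext σ
    simp only [Finset.mem_filter, Finset.mem_univ, true_and]
    constructor
    · rintro ⟨h1, h2⟩; exact h2
    · intro h2; exact ⟨h2 ▸ hS, h2⟩
  have hmap : ∀ S ∈ boundary f i, S.card ∈ Finset.range m := by
    intro S hS
    rw [boundary, Finset.mem_filter] at hS
    rw [Finset.mem_range]
    have hne : S ⊂ Finset.univ :=
      Finset.ssubset_univ_iff.2 (fun h => hS.2.1 (h ▸ Finset.mem_univ i))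
    have := Finset.card_lt_card hne
    simpa using this
  have hreg : ∑ S ∈ boundary f i, (fib i S : ℚ)
      = ∑ j ∈ Finset.range m, ∑ S ∈ (boundary f i).filter (fun S => S.card = j),
          (fib i S : ℚ) :=
    (Finset.sum_fiberwise_of_maps_to hmap _).symm
  have hlev : ∀ j ∈ Finset.range m,
      ∑ S ∈ (boundary f i).filter (fun S => S.card = j), (fib i S : ℚ)
        = mu f i j * ((Nat.factorial m : ℚ) / m) := by
    intro j hj
    rw [Finset.mem_range] at hj
    have hC : 0 < (m-1).choose j := Nat.choose_pos (by omega)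
    have hfib : ∀ S ∈ (boundary f i).filter (fun S => S.card = j),
        (fib i S : ℚ) = (Nat.factorial m : ℚ) / (((m-1).choose j : ℚ) * m) := by
      intro S hSm
      rw [Finset.mem_filter] at hSm
      have hSb := Finset.mem_filter.1 hSm.1
      have hSl : S ∈ levelSet i j := mem_levelSet.2 ⟨hSb.2.1, hSm.2⟩
      have hkey := fib_mul i j hj S hSl
      have hC2 : (((m-1).choose j : ℚ) * m) ≠ 0 := by
        have h1 : (0:ℚ) < ((m-1).choose j : ℚ) := by exact_mod_cast hC
        have h2 : (0:ℚ) < (m : ℚ) := by exact_mod_cast hm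
        positivity
      rw [eq_div_iff hC2]
      push_cast [← hkey]
      ring
    rw [Finset.sum_congr rfl hfib, Finset.sum_const, mu]
    have hC2 : (((m-1).choose j : ℚ)) ≠ 0 := by
      exact_mod_cast hC.ne'
    have hm2 : ((m:ℚ)) ≠ 0 := by exact_mod_cast hm.ne'
    field_simp
    rw [nsmul_eq_mul]
    field_simp
  have hfact : ((Nat.factorial m : ℕ) : ℚ) ≠ 0 := by
    exact_mod_cast (Nat.factorial_pos m).ne'
  have hm2 : ((m:ℚ)) ≠ 0 := by exact_mod_cast hm.ne'
  rw [shapley, h0, hN]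
  push_cast
  rw [hreg, Finset.sum_congr rfl hlev, ← Finset.sum_mul]
  field_simp

end ShapleyFormula

section LYM

lemma lym_step {m : ℕ} (i : Fin m) (pr : Finset (Fin m) → Bool)
    (hup : ∀ S x, x ≠ i → pr S = true → pr (insert x S) = true) (j : ℕ) :
    (m - 1 - j) * #((levelSet i j).filter (fun S => pr S = true))
      ≤ (j+1) * #((levelSet i (j+1)).filter (fun S => pr S = true)) := by
  classical
  set A := (levelSet i j).filter (fun S => pr S = true) with hA
  set B := (levelSet i (j+1)).filter (fun S => pr S = true) with hB
  have h1 : #(A.sigma (fun S => Finset.univ.filter (fun x => x ≠ i ∧ x ∉ S)))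
      = #A * (m - 1 - j) := by
    rw [Finset.card_sigma]
    rw [Finset.sum_congr rfl (fun S hS => ?_), Finset.sum_const, smul_eq_mul]
    have hSm := Finset.mem_filter.1 hS
    have hlev := mem_levelSet.1 hSm.1
    have he : Finset.univ.filter (fun x => x ≠ i ∧ x ∉ S)
        = Finset.univ \ insert i S := by
      ext x
      simp only [Finset.mem_filter, Finset.mem_univ, true_and, Finset.mem_sdiff,
        Finset.mem_insert]
      tauto
    rw [he, Finset.card_sdiff_of_subset (Finset.subset_univ _), Finset.card_univ, Fintype.card_fin,
      Finset.card_insert_of_notMem hlev.1, hlev.2]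
    omega
  have h2 : #(B.sigma (fun T => Finset.univ.filter (fun x => x ∈ T)))
      = #B * (j+1) := by
    rw [Finset.card_sigma]
    rw [Finset.sum_congr rfl (fun T hT => ?_), Finset.sum_const, smul_eq_mul]
    have hTm := Finset.mem_filter.1 hT
    have hlev := mem_levelSet.1 hTm.1
    have he : Finset.univ.filter (fun x => x ∈ T) = T := by
      ext x; simp
    rw [he, hlev.2]
  have hinj : #(A.sigma (fun S => Finset.univ.filter (fun x => x ≠ i ∧ x ∉ S)))
      ≤ #(B.sigma (fun T => Finset.univ.filter (fun x => x ∈ T))) := by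
    apply Finset.card_le_card_of_injOn (fun p => ⟨insert p.2 p.1, p.2⟩)
    · rintro ⟨S, x⟩ hp
      rw [Finset.mem_coe, Finset.mem_sigma] at hp
      obtain ⟨hS, hx⟩ := hp
      rw [Finset.mem_filter] at hx
      obtain ⟨-, hxi, hxS⟩ := hx
      have hSm := Finset.mem_filter.1 hS
      have hlev := mem_levelSet.1 hSm.1
      rw [Finset.mem_coe, Finset.mem_sigma]
      constructor
      · rw [hB, Finset.mem_filter]
        refine ⟨mem_levelSet.2 ⟨?_, ?_⟩, hup S x hxi hSm.2⟩
        · rw [Finset.mem_insert]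
          rintro (rfl | h)
          · exact hxi rfl
          · exact hlev.1 h
        · rw [Finset.card_insert_of_notMem hxS, hlev.2]
      · simp
    · rintro ⟨S, x⟩ hp ⟨S', x'⟩ hp' heq
      simp only [Finset.coe_sigma, Set.mem_sigma_iff] at hp hp'
      obtain ⟨h1, h2⟩ := Sigma.mk.inj_iff.1 heq
      have hx : x = x' := by
        have := congrArg Sigma.snd heq
        exact this
      subst hx
      have hxS : x ∉ S := by
        have := hp.2; simp only [Finset.mem_coe, Finset.mem_filter] at this; exact this.2.2
      have hxS' : x ∉ S' := by
        have := hp'.2; simp only [Finset.mem_coe, Finset.mem_filter] at this; exact this.2.2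
      have hSS : S = S' := by
        have h3 : insert x S = insert x S' := h1
        rw [← Finset.erase_insert hxS, ← Finset.erase_insert hxS', h3]
      subst hSS
      rfl
  rw [h1, h2, mul_comm (#A), mul_comm (#B)] at hinj
  exact hinj

lemma lym_norm {m : ℕ} (i : Fin m) (pr : Finset (Fin m) → Bool)
    (hup : ∀ S x, x ≠ i → pr S = true → pr (insert x S) = true) (j : ℕ)
    (hj : j + 1 ≤ m - 1) :
    (#((levelSet i j).filter (fun S => pr S = true)) : ℚ) / ((m-1).choose j : ℚ)
      ≤ (#((levelSet i (j+1)).filter (fun S => pr S = true)) : ℚ)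
          / ((m-1).choose (j+1) : ℚ) := by
  have hC1 : 0 < (m-1).choose j := Nat.choose_pos (by omega)
  have hC2 : 0 < (m-1).choose (j+1) := Nat.choose_pos hj
  rw [div_le_div_iff₀ (by exact_mod_cast hC1) (by exact_mod_cast hC2)]
  have key : #((levelSet i j).filter (fun S => pr S = true)) * (m-1).choose (j+1)
      ≤ #((levelSet i (j+1)).filter (fun S => pr S = true)) * (m-1).choose j := by
    have hstep := lym_step i pr hup j
    have hid : (m-1).choose (j+1) * (j+1) = (m-1).choose j * (m - 1 - j) :=
      Nat.choose_succ_right_eq (m-1) j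
    have hpos : 0 < m - 1 - j := by omega
    have h3 : (m - 1 - j) * (#((levelSet i j).filter (fun S => pr S = true))
        * (m-1).choose (j+1)) ≤ (m - 1 - j)
          * (#((levelSet i (j+1)).filter (fun S => pr S = true)) * (m-1).choose j) := by
      calc (m - 1 - j) * (#((levelSet i j).filter (fun S => pr S = true))
            * (m-1).choose (j+1))
          = ((m - 1 - j) * #((levelSet i j).filter (fun S => pr S = true)))
            * (m-1).choose (j+1) := by ring
        _ ≤ ((j+1) * #((levelSet i (j+1)).filter (fun S => pr S = true)))
            * (m-1).choose (j+1) := Nat.mul_le_mul_right _ hstep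
        _ = #((levelSet i (j+1)).filter (fun S => pr S = true))
            * ((m-1).choose (j+1) * (j+1)) := by ring
        _ = (m - 1 - j) * (#((levelSet i (j+1)).filter (fun S => pr S = true))
            * (m-1).choose j) := by rw [hid]; ring
    exact Nat.le_of_mul_le_mul_left h3 hpos
  exact_mod_cast key

end LYM

section EvenOdd

/-- normalized count of true sets at level j -/
noncomputable def tq {m : ℕ} (f : Finset (Fin m) → Bool) (i : Fin m) (j : ℕ) : ℚ :=
  (#((levelSet i j).filter (fun S => f S = true)) : ℚ) / ((m-1).choose j : ℚ)

noncomputable def qq {m : ℕ} (f : Finset (Fin m) → Bool) (i : Fin m) (j : ℕ) : ℚ :=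
  (#((levelSet i j).filter (fun S => f (insert i S) = true)) : ℚ) / ((m-1).choose j : ℚ)

lemma qcount_split {m : ℕ} (f : Finset (Fin m) → Bool) (i : Fin m) (hmono : MonotoneB f)
    (j : ℕ) :
    #((levelSet i j).filter (fun S => f (insert i S) = true))
      = #((boundary f i).filter (fun S => S.card = j))
        + #((levelSet i j).filter (fun S => f S = true)) := by
  classical
  have h1 : (boundary f i).filter (fun S => S.card = j)
      = ((levelSet i j).filter (fun S => f (insert i S) = true)).filter
          (fun S => ¬ (f S = true)) := by
    ext S
    simp only [boundary, Finset.mem_filter, Finset.mem_univ, true_and, mem_levelSet,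
      Bool.not_eq_true]
    constructor
    · rintro ⟨⟨h1, h2, h3⟩, h4⟩
      exact ⟨⟨⟨h1, h4⟩, h2⟩, h3⟩
    · rintro ⟨⟨⟨h1, h4⟩, h2⟩, h3⟩
      exact ⟨⟨h1, h2, h3⟩, h4⟩
  have h2 : ((levelSet i j).filter (fun S => f (insert i S) = true)).filter
        (fun S => f S = true)
      = (levelSet i j).filter (fun S => f S = true) := by
    ext S
    simp only [Finset.mem_filter]
    constructor
    · rintro ⟨⟨h1, h2⟩, h3⟩
      exact ⟨h1, h3⟩
    · rintro ⟨h1, h3⟩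
      exact ⟨⟨h1, hmono S (insert i S) (Finset.subset_insert i S) h3⟩, h3⟩
  have h3 := Finset.card_filter_add_card_filter_not
    (s := (levelSet i j).filter (fun S => f (insert i S) = true))
    (p := fun S => f S = true)
  rw [h2] at h3
  rw [← h1] at h3
  omega

lemma mu_eq_qq_sub_tq {m : ℕ} (f : Finset (Fin m) → Bool) (i : Fin m) (hmono : MonotoneB f)
    (j : ℕ) : mu f i j = qq f i j - tq f i j := by
  rw [mu, qq, tq, qcount_split f i hmono j]
  push_cast
  ring

lemma tq_le_one {m : ℕ} (f : Finset (Fin m) → Bool) (i : Fin m) (j : ℕ) (hj : j ≤ m - 1) :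
    tq f i j ≤ 1 := by
  rw [tq]
  have hC : 0 < (m-1).choose j := Nat.choose_pos hj
  rw [div_le_one (by exact_mod_cast hC)]
  have h := Finset.card_filter_le (levelSet i j) (fun S => f S = true)
  rw [levelSet_card] at h
  exact_mod_cast h

lemma qq_nonneg {m : ℕ} (f : Finset (Fin m) → Bool) (i : Fin m) (j : ℕ) : 0 ≤ qq f i j := by
  rw [qq]; positivity

lemma tq_mono {m : ℕ} (f : Finset (Fin m) → Bool) (i : Fin m) (hmono : MonotoneB f)
    (j : ℕ) (hj : j + 1 ≤ m - 1) : tq f i j ≤ tq f i (j+1) :=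
  lym_norm i (fun S => f S) (fun S x _ h => hmono S (insert x S) (Finset.subset_insert x S) h)
    j hj

lemma qq_mono {m : ℕ} (f : Finset (Fin m) → Bool) (i : Fin m) (hmono : MonotoneB f)
    (j : ℕ) (hj : j + 1 ≤ m - 1) : qq f i j ≤ qq f i (j+1) :=
  lym_norm i (fun S => f (insert i S))
    (fun S x _ h => hmono (insert i S) (insert i (insert x S))
      (Finset.insert_subset_insert i (Finset.subset_insert x S)) h) j hj

lemma range_odd_even (h : ℕ → ℚ) (N : ℕ) :
    ∑ j ∈ Finset.range (2*N+1), h j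
      = ∑ k ∈ Finset.range (N+1), h (2*k) + ∑ k ∈ Finset.range N, h (2*k+1) := by
  induction N with
  | zero => simp
  | succ N ih =>
    have e1 : 2*(N+1)+1 = (2*N+1) + 1 + 1 := by ring
    rw [e1, Finset.sum_range_succ, Finset.sum_range_succ, ih,
      Finset.sum_range_succ (fun k => h (2*k)) (N+1),
      Finset.sum_range_succ (fun k => h (2*k+1)) N]
    have e2 : 2*N+1 = 2*(N+1)-1 := by omega
    have e3 : 2*N+1+1 = 2*(N+1) := by omega
    rw [e3]
    ring_nf

lemma even_bound {n : ℕ} (hn : 0 < n) (f : Finset (Fin (2*n-1)) → Bool) (i : Fin (2*n-1))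
    (hmono : MonotoneB f) :
    (∑ j ∈ Finset.range (2*n-1), mu f i j - 1)/2 ≤ ∑ k ∈ Finset.range n, mu f i (2*k) := by
  have hsplit : ∑ j ∈ Finset.range (2*n-1), mu f i j
      = ∑ k ∈ Finset.range n, mu f i (2*k) + ∑ k ∈ Finset.range (n-1), mu f i (2*k+1) := by
    have := range_odd_even (fun j => mu f i j) (n-1)
    rw [show 2*(n-1)+1 = 2*n-1 by omega, show n-1+1 = n by omega] at this
    exact this
  have hO : ∑ k ∈ Finset.range (n-1), mu f i (2*k+1)
      ≤ ∑ k ∈ Finset.range n, mu f i (2*k) + 1 := by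
    have hstep : ∀ k ∈ Finset.range (n-1),
        mu f i (2*k+1) ≤ qq f i (2*k+2) - tq f i (2*k) := by
      intro k hk
      rw [Finset.mem_range] at hk
      rw [mu_eq_qq_sub_tq f i hmono]
      have h1 : qq f i (2*k+1) ≤ qq f i (2*k+1+1) := qq_mono f i hmono (2*k+1) (by omega)
      have h2 : tq f i (2*k) ≤ tq f i (2*k+1) := tq_mono f i hmono (2*k) (by omega)
      have : 2*k+1+1 = 2*k+2 := by omega
      rw [this] at h1
      linarith
    calc ∑ k ∈ Finset.range (n-1), mu f i (2*k+1)
        ≤ ∑ k ∈ Finset.range (n-1), (qq f i (2*k+2) - tq f i (2*k)) :=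
          Finset.sum_le_sum hstep
      _ = ∑ k ∈ Finset.range (n-1), qq f i (2*k+2)
          - ∑ k ∈ Finset.range (n-1), tq f i (2*k) := by rw [Finset.sum_sub_distrib]
      _ ≤ ∑ k ∈ Finset.range n, mu f i (2*k) + 1 := by
          have hq : ∑ k ∈ Finset.range n, qq f i (2*k)
              = ∑ k ∈ Finset.range (n-1), qq f i (2*k+2) + qq f i 0 := by
            have := Finset.sum_range_succ' (fun k => qq f i (2*k)) (n-1)
            rw [show n-1+1 = n by omega] at this
            rw [this]
            have he : ∑ k ∈ Finset.range (n-1), qq f i (2*(k+1))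
                = ∑ k ∈ Finset.range (n-1), qq f i (2*k+2) :=
              Finset.sum_congr rfl (fun k _ => congrArg (qq f i) (by omega))
            rw [he]
          have ht : ∑ k ∈ Finset.range n, tq f i (2*k)
              = ∑ k ∈ Finset.range (n-1), tq f i (2*k) + tq f i (2*(n-1)) := by
            have := Finset.sum_range_succ (fun k => tq f i (2*k)) (n-1)
            rw [show n-1+1 = n by omega] at this
            exact this
          have hmu : ∑ k ∈ Finset.range n, mu f i (2*k)
              = ∑ k ∈ Finset.range n, qq f i (2*k) - ∑ k ∈ Finset.range n, tq f i (2*k) := by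
            rw [← Finset.sum_sub_distrib]
            exact Finset.sum_congr rfl (fun k _ => mu_eq_qq_sub_tq f i hmono (2*k))
          have hq0 : 0 ≤ qq f i 0 := qq_nonneg f i 0
          have ht1 : tq f i (2*(n-1)) ≤ 1 := tq_le_one f i (2*(n-1)) (by omega)
          linarith
  linarith

end EvenOdd

section Pairing

lemma card_filter_product {α β : Type*} [DecidableEq α] [DecidableEq β]
    (s : Finset α) (t : Finset β) (Q : α → β → Prop) [∀ a b, Decidable (Q a b)] :
    #((s ×ˢ t).filter (fun p => Q p.1 p.2)) = ∑ a ∈ s, #(t.filter (fun b => Q a b)) := by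
  rw [Finset.card_eq_sum_card_fiberwise (f := Prod.fst) (t := s)
    (fun p hp => (Finset.mem_product.1 (Finset.mem_filter.1 hp).1).1)]
  refine Finset.sum_congr rfl (fun a ha => ?_)
  apply Finset.card_nbij' Prod.snd (fun b => (a, b))
  · intro p hp
    simp only [Finset.mem_coe, Finset.mem_filter, Finset.mem_product] at hp ⊢
    obtain ⟨⟨⟨h1, h2⟩, h3⟩, h4⟩ := hp
    rw [h4] at h3
    exact ⟨h2, h3⟩
  · intro b hb
    simp only [Finset.mem_coe, Finset.mem_filter, Finset.mem_product] at hb ⊢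
    exact ⟨⟨⟨ha, hb.1⟩, hb.2⟩, trivial⟩
  · rintro ⟨p1, p2⟩ hp
    simp only [Finset.mem_coe, Finset.mem_filter] at hp
    exact (congrArg (fun x => (x, p2)) hp.2).symm
  · intro b _
    rfl

variable {n : ℕ}

def Pre (π : Fin (2*n-1) → Fin n) (S : Finset (Fin n)) : Finset (Fin (2*n-1)) :=
  Finset.univ.filter (fun j => π j ∈ S)

lemma pm_spec (hn : 0 < n) {π : Fin (2*n-1) → Fin n} (hπ : π ∈ pairingMaps n hn) :
    π ⟨0, by omega⟩ = ⟨0, hn⟩ ∧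
      ∀ i : Fin n, i.val ≠ 0 → #(Finset.univ.filter (fun j => π j = i)) = 2 :=
  (Finset.mem_filter.1 hπ).2

lemma fiber_z (hn : 0 < n) {π : Fin (2*n-1) → Fin n} (hπ : π ∈ pairingMaps n hn) :
    Finset.univ.filter (fun j => π j = (⟨0, hn⟩ : Fin n))
      = {(⟨0, by omega⟩ : Fin (2*n-1))} := by
  classical
  have hs := pm_spec hn hπ
  have htot : ∑ i : Fin n, #(Finset.univ.filter (fun j => π j = i)) = 2*n-1 := by
    rw [← Finset.card_eq_sum_card_fiberwise (f := π) (t := Finset.univ)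
      (fun j _ => Finset.mem_univ _)]
    rw [Finset.card_univ, Fintype.card_fin]
  have herase : ∑ i ∈ Finset.univ.erase (⟨0, hn⟩ : Fin n),
      #(Finset.univ.filter (fun j => π j = i)) = 2*(n-1) := by
    rw [Finset.sum_congr rfl (fun i hi => hs.2 i (fun h0 => (Finset.mem_erase.1 hi).1
      (Fin.ext h0)))]
    rw [Finset.sum_const, smul_eq_mul, Finset.card_erase_of_mem (Finset.mem_univ _),
      Finset.card_univ, Fintype.card_fin, mul_comm]
  have hadd := Finset.sum_erase_add Finset.univ
    (fun i => #(Finset.univ.filter (fun j => π j = i))) (Finset.mem_univ (⟨0, hn⟩ : Fin n))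
  rw [htot, herase] at hadd
  have hcard : #(Finset.univ.filter (fun j => π j = (⟨0, hn⟩ : Fin n))) = 1 := by
    have h2 : 2*(n-1) + #(Finset.univ.filter (fun j => π j = (⟨0, hn⟩ : Fin n)))
        = 2*n-1 := by simpa using hadd
    omega
  have hsub : {(⟨0, by omega⟩ : Fin (2*n-1))}
      ⊆ Finset.univ.filter (fun j => π j = (⟨0, hn⟩ : Fin n)) := by
    intro x hx
    rw [Finset.mem_singleton] at hx
    rw [hx, Finset.mem_filter]
    exact ⟨Finset.mem_univ _, hs.1⟩
  exact (Finset.eq_of_subset_of_card_le hsub (by rw [hcard]; simp)).symm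

lemma mem_fiber_z (hn : 0 < n) {π : Fin (2*n-1) → Fin n} (hπ : π ∈ pairingMaps n hn)
    (j : Fin (2*n-1)) : π j = (⟨0, hn⟩ : Fin n) ↔ j = (⟨0, by omega⟩ : Fin (2*n-1)) := by
  constructor
  · intro h
    have : j ∈ Finset.univ.filter (fun j => π j = (⟨0, hn⟩ : Fin n)) :=
      Finset.mem_filter.2 ⟨Finset.mem_univ _, h⟩
    rw [fiber_z hn hπ, Finset.mem_singleton] at this
    exact this
  · rintro rfl
    exact (pm_spec hn hπ).1

lemma Pre_card (hn : 0 < n) {π : Fin (2*n-1) → Fin n} (hπ : π ∈ pairingMaps n hn)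
    (S : Finset (Fin n)) (hz : (⟨0, hn⟩ : Fin n) ∉ S) : #(Pre π S) = 2 * S.card := by
  classical
  rw [Pre, Finset.card_eq_sum_card_fiberwise (f := π) (t := S) (s := Finset.univ.filter (fun j => π j ∈ S))
    (fun j hj => (Finset.mem_filter.1 hj).2)]
  have hcong : ∀ i ∈ S,
      #((Finset.univ.filter (fun j => π j ∈ S)).filter (fun j => π j = i)) = 2 := by
    intro i hi
    have he : (Finset.univ.filter (fun j => π j ∈ S)).filter (fun j => π j = i)
        = Finset.univ.filter (fun j => π j = i) := by
      ext j
      simp only [Finset.mem_filter, Finset.mem_univ, true_and]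
      constructor
      · rintro ⟨h1, h2⟩; exact h2
      · intro h2; exact ⟨h2 ▸ hi, h2⟩
    rw [he]
    exact (pm_spec hn hπ).2 i (fun h0 => hz ((Fin.ext h0 : i = ⟨0, hn⟩) ▸ hi))
  rw [Finset.sum_congr rfl hcong, Finset.sum_const, smul_eq_mul, mul_comm]

lemma Pre_not_mem (hn : 0 < n) {π : Fin (2*n-1) → Fin n} (hπ : π ∈ pairingMaps n hn)
    (S : Finset (Fin n)) (hz : (⟨0, hn⟩ : Fin n) ∉ S) :
    (⟨0, by omega⟩ : Fin (2*n-1)) ∉ Pre π S := by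
  rw [Pre, Finset.mem_filter]
  rintro ⟨-, h⟩
  rw [(pm_spec hn hπ).1] at h
  exact hz h

lemma Pre_mem_level (hn : 0 < n) {π : Fin (2*n-1) → Fin n} (hπ : π ∈ pairingMaps n hn)
    {k : ℕ} (S : Finset (Fin n)) (hS : S ∈ levelSet (⟨0, hn⟩ : Fin n) k) :
    Pre π S ∈ levelSet (⟨0, by omega⟩ : Fin (2*n-1)) (2*k) := by
  have h := mem_levelSet.1 hS
  exact mem_levelSet.2 ⟨Pre_not_mem hn hπ S h.1, by rw [Pre_card hn hπ S h.1, h.2]⟩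

lemma Pre_insert (hn : 0 < n) {π : Fin (2*n-1) → Fin n} (hπ : π ∈ pairingMaps n hn)
    (S : Finset (Fin n)) :
    Pre π (insert (⟨0, hn⟩ : Fin n) S)
      = insert (⟨0, by omega⟩ : Fin (2*n-1)) (Pre π S) := by
  ext j
  simp only [Pre, Finset.mem_filter, Finset.mem_univ, true_and, Finset.mem_insert]
  rw [mem_fiber_z hn hπ j]

lemma minor_boundary (hn : 0 < n) (f' : Finset (Fin (2*n-1)) → Bool)
    {π : Fin (2*n-1) → Fin n} (hπ : π ∈ pairingMaps n hn) (S : Finset (Fin n)) :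
    S ∈ boundary (minorFun f' π) (⟨0, hn⟩ : Fin n)
      ↔ (⟨0, hn⟩ : Fin n) ∉ S ∧ Pre π S ∈ boundary f' (⟨0, by omega⟩ : Fin (2*n-1)) := by
  rw [boundary, boundary, Finset.mem_filter]
  simp only [Finset.mem_univ, true_and]
  constructor
  · rintro ⟨hz, h1, h2⟩
    refine ⟨hz, Finset.mem_filter.2 ⟨Finset.mem_univ _, Pre_not_mem hn hπ S hz, ?_, h2⟩⟩
    rw [← Pre_insert hn hπ S]
    exact h1
  · rintro ⟨hz, hb⟩
    obtain ⟨-, h0, h1, h2⟩ := Finset.mem_filter.1 hb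
    refine ⟨hz, ?_, h2⟩
    show f' (Pre π (insert (⟨0, hn⟩ : Fin n) S)) = true
    rw [Pre_insert hn hπ S]
    exact h1

lemma pm_comp (hn : 0 < n) {π : Fin (2*n-1) → Fin n} (hπ : π ∈ pairingMaps n hn)
    (ρ : Equiv.Perm (Fin (2*n-1))) (hρ : ρ ⟨0, by omega⟩ = ⟨0, by omega⟩) :
    (π ∘ ρ) ∈ pairingMaps n hn := by
  rw [pairingMaps, Finset.mem_filter]
  refine ⟨Finset.mem_univ _, ?_, ?_⟩
  · show π (ρ ⟨0, by omega⟩) = ⟨0, hn⟩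
    rw [hρ]
    exact (pm_spec hn hπ).1
  · intro i hi
    have hb : #(Finset.univ.filter (fun j => (π ∘ ρ) j = i))
        = #(Finset.univ.filter (fun j => π j = i)) := by
      apply Finset.card_nbij' (fun j => ρ j) (fun j => ρ.symm j)
      · intro j hj
        rw [Finset.mem_coe, Finset.mem_filter] at hj ⊢
        exact ⟨Finset.mem_univ _, hj.2⟩
      · intro j hj
        rw [Finset.mem_coe, Finset.mem_filter] at hj ⊢
        refine ⟨Finset.mem_univ _, ?_⟩
        show π (ρ (ρ.symm j)) = i
        rw [Equiv.apply_symm_apply]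
        exact hj.2
      · intro j _; exact ρ.symm_apply_apply j
      · intro j _; exact ρ.apply_symm_apply j
    rw [hb]
    exact (pm_spec hn hπ).2 i hi

lemma Pre_comp (π : Fin (2*n-1) → Fin n) (ρ : Equiv.Perm (Fin (2*n-1)))
    (S : Finset (Fin n)) : Pre (π ∘ ρ) S = (Pre π S).image ρ.symm := by
  ext j
  simp only [Pre, Finset.mem_filter, Finset.mem_univ, true_and, Finset.mem_image,
    Function.comp_apply]
  constructor
  · intro h
    exact ⟨ρ j, h, ρ.symm_apply_apply j⟩
  · rintro ⟨a, ha, rfl⟩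
    simpa using ha

lemma Npair_const (hn : 0 < n) (k : ℕ) (T T' : Finset (Fin (2*n-1)))
    (hT : T ∈ levelSet (⟨0, by omega⟩ : Fin (2*n-1)) (2*k))
    (hT' : T' ∈ levelSet (⟨0, by omega⟩ : Fin (2*n-1)) (2*k)) :
    #((pairingMaps n hn ×ˢ levelSet (⟨0, hn⟩ : Fin n) k).filter
        (fun p => Pre p.1 p.2 = T))
      = #((pairingMaps n hn ×ˢ levelSet (⟨0, hn⟩ : Fin n) k).filter
        (fun p => Pre p.1 p.2 = T')) := by
  classical
  obtain ⟨ρ, hρ0, hρ⟩ := exists_perm_fix_mem_iff (⟨0, by omega⟩ : Fin (2*n-1)) T T'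
    (mem_levelSet.1 hT).1 (mem_levelSet.1 hT').1
    (by rw [(mem_levelSet.1 hT).2, (mem_levelSet.1 hT').2])
  have hρs0 : ρ.symm ⟨0, by omega⟩ = ⟨0, by omega⟩ := by
    rw [Equiv.symm_apply_eq]; exact hρ0.symm
  have himg : T.image ρ = T' := by
    apply Finset.eq_of_subset_of_card_le
    · intro x hx
      obtain ⟨y, hy, rfl⟩ := Finset.mem_image.1 hx
      exact (hρ y).1 hy
    · rw [Finset.card_image_of_injective _ ρ.injective,
        (mem_levelSet.1 hT).2, (mem_levelSet.1 hT').2]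
  have himg' : T'.image ρ.symm = T := by
    rw [← himg, Finset.image_image]
    have hcc : ∀ x ∈ T, (⇑ρ.symm ∘ ⇑ρ) x = x := fun x _ => ρ.symm_apply_apply x
    rw [Finset.image_congr hcc, Finset.image_id']
  apply Finset.card_nbij' (fun p => (p.1 ∘ ρ.symm, p.2)) (fun p => (p.1 ∘ ρ, p.2))
  · rintro ⟨π, S⟩ hp
    rw [Finset.mem_coe, Finset.mem_filter, Finset.mem_product] at hp ⊢
    obtain ⟨⟨h1, h2⟩, h3⟩ := hp
    refine ⟨⟨pm_comp hn h1 ρ.symm hρs0, h2⟩, ?_⟩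
    show Pre (π ∘ ρ.symm) S = T'
    rw [Pre_comp, Equiv.symm_symm, h3, himg]
  · rintro ⟨π, S⟩ hp
    rw [Finset.mem_coe, Finset.mem_filter, Finset.mem_product] at hp ⊢
    obtain ⟨⟨h1, h2⟩, h3⟩ := hp
    refine ⟨⟨pm_comp hn h1 ρ hρ0, h2⟩, ?_⟩
    show Pre (π ∘ ρ) S = T
    rw [Pre_comp, h3, himg']
  · rintro ⟨π, S⟩ _
    have h : (π ∘ ⇑ρ.symm) ∘ ⇑ρ = π := by
      funext x; simp
    exact congrArg (fun q => (q, S)) h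
  · rintro ⟨π, S⟩ _
    have h : (π ∘ ⇑ρ) ∘ ⇑ρ.symm = π := by
      funext x; simp
    exact congrArg (fun q => (q, S)) h

lemma Npair_sum (hn : 0 < n) (k : ℕ) :
    ∑ T ∈ levelSet (⟨0, by omega⟩ : Fin (2*n-1)) (2*k),
      #((pairingMaps n hn ×ˢ levelSet (⟨0, hn⟩ : Fin n) k).filter
        (fun p => Pre p.1 p.2 = T))
      = #(pairingMaps n hn) * (n-1).choose k := by
  classical
  have h := Finset.card_eq_sum_card_fiberwise (f := fun p => Pre p.1 p.2)
    (s := pairingMaps n hn ×ˢ levelSet (⟨0, hn⟩ : Fin n) k)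
    (t := levelSet (⟨0, by omega⟩ : Fin (2*n-1)) (2*k)) (fun p hp => by
      rw [Finset.mem_coe, Finset.mem_product] at hp
      exact Pre_mem_level hn hp.1 p.2 hp.2)
  exact h.symm.trans (by rw [Finset.card_product, levelSet_card])

lemma Npair_mul (hn : 0 < n) (k : ℕ) (T : Finset (Fin (2*n-1)))
    (hT : T ∈ levelSet (⟨0, by omega⟩ : Fin (2*n-1)) (2*k)) :
    #((pairingMaps n hn ×ˢ levelSet (⟨0, hn⟩ : Fin n) k).filter
        (fun p => Pre p.1 p.2 = T)) * ((2*n-1-1).choose (2*k))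
      = #(pairingMaps n hn) * (n-1).choose k := by
  have hconst : ∀ T' ∈ levelSet (⟨0, by omega⟩ : Fin (2*n-1)) (2*k),
      #((pairingMaps n hn ×ˢ levelSet (⟨0, hn⟩ : Fin n) k).filter
        (fun p => Pre p.1 p.2 = T'))
      = #((pairingMaps n hn ×ˢ levelSet (⟨0, hn⟩ : Fin n) k).filter
        (fun p => Pre p.1 p.2 = T)) :=
    fun T' hT' => Npair_const hn k T' T hT' hT
  have := Npair_sum hn k
  rw [Finset.sum_congr rfl hconst, Finset.sum_const, smul_eq_mul, levelSet_card] at this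
  rw [← this]
  ring

lemma bsum (hn : 0 < n) (f' : Finset (Fin (2*n-1)) → Bool) (k : ℕ) :
    (∑ π ∈ pairingMaps n hn,
       #((boundary (minorFun f' π) (⟨0, hn⟩ : Fin n)).filter (fun S => S.card = k)))
      * ((2*n-1-1).choose (2*k))
    = #((boundary f' (⟨0, by omega⟩ : Fin (2*n-1))).filter (fun S => S.card = 2*k))
        * (#(pairingMaps n hn) * (n-1).choose k) := by
  classical
  have step1 : ∀ π ∈ pairingMaps n hn,
      #((boundary (minorFun f' π) (⟨0, hn⟩ : Fin n)).filter (fun S => S.card = k))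
        = #((levelSet (⟨0, hn⟩ : Fin n) k).filter
            (fun S => Pre π S ∈ boundary f' (⟨0, by omega⟩ : Fin (2*n-1)))) := by
    intro π hπ
    congr 1
    ext S
    rw [Finset.mem_filter, Finset.mem_filter, minor_boundary hn f' hπ S, mem_levelSet]
    tauto
  rw [Finset.sum_congr rfl step1]
  rw [← card_filter_product (pairingMaps n hn) (levelSet (⟨0, hn⟩ : Fin n) k)
    (fun π S => Pre π S ∈ boundary f' (⟨0, by omega⟩ : Fin (2*n-1)))]
  rw [Finset.card_eq_sum_card_fiberwise (f := fun p => Pre p.1 p.2)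
    (t := (boundary f' (⟨0, by omega⟩ : Fin (2*n-1))).filter (fun S => S.card = 2*k))
    (fun p hp => by
      rw [Finset.mem_coe, Finset.mem_filter] at hp
      obtain ⟨hprod, hb⟩ := hp
      rw [Finset.mem_product] at hprod
      rw [Finset.mem_coe, Finset.mem_filter]
      refine ⟨hb, ?_⟩
      exact (mem_levelSet.1 (Pre_mem_level hn hprod.1 p.2 hprod.2)).2)]
  rw [Finset.sum_mul]
  have hper : ∀ T ∈ (boundary f' (⟨0, by omega⟩ : Fin (2*n-1))).filter
      (fun S => S.card = 2*k),
      #(((pairingMaps n hn ×ˢ levelSet (⟨0, hn⟩ : Fin n) k).filter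
          (fun p => Pre p.1 p.2 ∈ boundary f' (⟨0, by omega⟩ : Fin (2*n-1)))).filter
          (fun p => Pre p.1 p.2 = T)) * ((2*n-1-1).choose (2*k))
        = #(pairingMaps n hn) * (n-1).choose k := by
    intro T hT
    rw [Finset.mem_filter] at hT
    have hTb := Finset.mem_filter.1 hT.1
    have hTlev : T ∈ levelSet (⟨0, by omega⟩ : Fin (2*n-1)) (2*k) :=
      mem_levelSet.2 ⟨hTb.2.1, hT.2⟩
    have he : ((pairingMaps n hn ×ˢ levelSet (⟨0, hn⟩ : Fin n) k).filter
          (fun p => Pre p.1 p.2 ∈ boundary f' (⟨0, by omega⟩ : Fin (2*n-1)))).filter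
          (fun p => Pre p.1 p.2 = T)
        = (pairingMaps n hn ×ˢ levelSet (⟨0, hn⟩ : Fin n) k).filter
          (fun p => Pre p.1 p.2 = T) := by
      ext p
      simp only [Finset.mem_filter]
      constructor
      · rintro ⟨⟨h1, h2⟩, h3⟩
        exact ⟨h1, h3⟩
      · rintro ⟨h1, h3⟩
        exact ⟨⟨h1, h3 ▸ hT.1⟩, h3⟩
    rw [he]
    exact Npair_mul hn k T hTlev
  rw [Finset.sum_congr rfl hper, Finset.sum_const, smul_eq_mul]

lemma pairing_identity (hn : 0 < n) (f' : Finset (Fin (2*n-1)) → Bool) :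
    ∑ π ∈ pairingMaps n hn, shapley (minorFun f' π) (⟨0, hn⟩ : Fin n)
      = (#(pairingMaps n hn) : ℚ) *
          (∑ k ∈ Finset.range n, mu f' (⟨0, by omega⟩ : Fin (2*n-1)) (2*k)) / n := by
  classical
  have hshap : ∀ π ∈ pairingMaps n hn, shapley (minorFun f' π) (⟨0, hn⟩ : Fin n)
      = (∑ k ∈ Finset.range n, mu (minorFun f' π) (⟨0, hn⟩ : Fin n) k)/(n:ℚ) :=
    fun π _ => shapley_eq _ _
  rw [Finset.sum_congr rfl hshap, ← Finset.sum_div]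
  congr 1
  rw [Finset.sum_comm]
  rw [Finset.mul_sum]
  apply Finset.sum_congr rfl
  intro k hk
  rw [Finset.mem_range] at hk
  have hC1 : 0 < (n-1).choose k := Nat.choose_pos (by omega)
  have hC2 : 0 < (2*n-1-1).choose (2*k) := Nat.choose_pos (by omega)
  have hC1Q : (0:ℚ) < ((n-1).choose k : ℚ) := by exact_mod_cast hC1
  have hC2Q : (0:ℚ) < ((2*n-1-1).choose (2*k) : ℚ) := by exact_mod_cast hC2
  have hmu : ∀ π ∈ pairingMaps n hn, mu (minorFun f' π) (⟨0, hn⟩ : Fin n) k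
      = (#((boundary (minorFun f' π) (⟨0, hn⟩ : Fin n)).filter (fun S => S.card = k)) : ℚ)
        / ((n-1).choose k : ℚ) := fun π _ => rfl
  rw [Finset.sum_congr rfl hmu, ← Finset.sum_div, ← Nat.cast_sum]
  rw [mu, div_eq_iff hC1Q.ne']
  have hr : (#(pairingMaps n hn) : ℚ) *
        ((#((boundary f' (⟨0, by omega⟩ : Fin (2*n-1))).filter
            (fun S => S.card = 2*k)) : ℚ) / ((2*n-1-1).choose (2*k) : ℚ))
        * ((n-1).choose k : ℚ)
      = (#((boundary f' (⟨0, by omega⟩ : Fin (2*n-1))).filter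
            (fun S => S.card = 2*k)) : ℚ)
          * ((#(pairingMaps n hn) : ℚ) * ((n-1).choose k : ℚ))
          / ((2*n-1-1).choose (2*k) : ℚ) := by
    ring
  rw [hr, eq_div_iff hC2Q.ne']
  exact_mod_cast bsum hn f' k

lemma pairing_nonempty (hn : 0 < n) : (pairingMaps n hn).Nonempty := by
  classical
  refine ⟨fun j => ⟨(j.val+1)/2, by have := j.isLt; omega⟩, ?_⟩
  rw [pairingMaps, Finset.mem_filter]
  refine ⟨Finset.mem_univ _, ?_, ?_⟩
  · apply Fin.ext
    simp
  · intro i hi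
    have hi2 := i.isLt
    have he : (Finset.univ.filter (fun j : Fin (2*n-1) =>
          (⟨(j.val+1)/2, by have := j.isLt; omega⟩ : Fin n) = i))
        = {(⟨2*i.val-1, by omega⟩ : Fin (2*n-1)), (⟨2*i.val, by omega⟩ : Fin (2*n-1))} := by
      ext j
      have hj := j.isLt
      simp only [Finset.mem_filter, Finset.mem_univ, true_and, Finset.mem_insert,
        Finset.mem_singleton, Fin.ext_iff]
      show (j.val+1)/2 = i.val ↔ _
      omega
    rw [he, Finset.card_insert_of_notMem, Finset.card_singleton]
    rw [Finset.mem_singleton, Fin.ext_iff]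
    show ¬ (2*i.val-1 = 2*i.val)
    omega

lemma shapley_le_one {m : ℕ} (f : Finset (Fin m) → Bool) (i : Fin m) :
    shapley f i ≤ 1 := by
  rw [shapley]
  apply div_le_one_of_le₀
  · have h1 := Finset.card_filter_le (Finset.univ : Finset (Equiv.Perm (Fin m)))
      (fun σ => ∃ j : Fin m, σ j = i ∧
        f ((Finset.univ.filter (fun k => k < j)).image (fun k => σ k)) = false ∧
        f ((Finset.univ.filter (fun k => k ≤ j)).image (fun k => σ k)) = true)
    rw [Finset.card_univ, Fintype.card_perm, Fintype.card_fin] at h1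
    exact_mod_cast h1
  · positivity

end Pairing


/-- If `Φ_{f'}(1) ≥ λ ≥ 1/n`, then the expected Shapley value of coordinate 1
of a uniformly random pairing minor of `f'` is at least some `γ(λ) > 0`. -/
theorem expected_shapley_random_pairing (lam : ℚ) : ∃ γ : ℚ, 0 < γ ∧
    ∀ (n : ℕ) (hn : 0 < n) (f' : Finset (Fin (2*n-1)) → Bool),
      MonotoneB f' → lam ≤ shapley f' ⟨0, by omega⟩ → 1 / (n : ℚ) ≤ lam →
      γ ≤ (∑ π ∈ pairingMaps n hn, shapley (minorFun f' π) ⟨0, hn⟩) /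
            (((pairingMaps n hn).card : ℕ) : ℚ) := by
  classical
  refine ⟨if 0 < lam ∧ lam < 1 then lam*(1-lam)/2 else 1/2, ?_, ?_⟩
  · split_ifs with h
    · obtain ⟨h1, h2⟩ := h
      nlinarith
    · norm_num
  · intro n hn f' hmono hshap hlam
    have hnQ : (0:ℚ) < n := by exact_mod_cast hn
    have hlam0 : 0 < lam := lt_of_lt_of_le (by positivity) hlam
    have hPpos : 0 < #(pairingMaps n hn) := Finset.card_pos.2 (pairing_nonempty hn)
    have hPQ : (0:ℚ) < (#(pairingMaps n hn) : ℚ) := by exact_mod_cast hPpos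
    set X := ∑ k ∈ Finset.range n, mu f' (⟨0, by omega⟩ : Fin (2*n-1)) (2*k) with hX
    have havg : (∑ π ∈ pairingMaps n hn, shapley (minorFun f' π) ⟨0, hn⟩)
        / ((#(pairingMaps n hn) : ℕ) : ℚ) = X / n := by
      rw [pairing_identity hn f', ← hX]
      field_simp
    rw [havg]
    have htotal := shapley_eq f' (⟨0, by omega⟩ : Fin (2*n-1))
    have hM : ((2*n-1 : ℕ) : ℚ) = 2*(n:ℚ) - 1 := by
      rw [Nat.cast_sub (by omega : 1 ≤ 2*n)]
      push_cast
      ring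
    have hMpos : (0:ℚ) < 2*(n:ℚ)-1 := by
      have : (1:ℚ) ≤ n := by exact_mod_cast hn
      linarith
    have hsum_ge : (2*(n:ℚ)-1) * lam
        ≤ ∑ j ∈ Finset.range (2*n-1), mu f' (⟨0, by omega⟩ : Fin (2*n-1)) j := by
      have h1 : lam ≤ (∑ j ∈ Finset.range (2*n-1),
          mu f' (⟨0, by omega⟩ : Fin (2*n-1)) j)/(2*(n:ℚ)-1) := by
        rw [← hM, ← htotal]
        exact hshap
      rw [le_div_iff₀ hMpos] at h1
      linarith
    have hEb := even_bound hn f' (⟨0, by omega⟩ : Fin (2*n-1)) hmono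
    rw [← hX] at hEb
    have hX_ge : ((2*(n:ℚ)-1)*lam - 1)/2 ≤ X := by
      have : (∑ j ∈ Finset.range (2*n-1), mu f' (⟨0, by omega⟩ : Fin (2*n-1)) j - 1)/2
          ≤ X := hEb
      linarith
    by_cases hc : lam < 1
    · rw [if_pos ⟨hlam0, hc⟩]
      have h1 : 1 ≤ (n:ℚ) * lam := by
        rw [div_le_iff₀ hnQ] at hlam
        linarith
      rw [le_div_iff₀ hnQ]
      nlinarith
    · rw [if_neg (fun hcon => hc hcon.2)]
      have hle1 : lam ≤ 1 := le_trans hshap (shapley_le_one f' _)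
      have hlam1 : lam = 1 := le_antisymm hle1 (not_lt.1 hc)
      by_cases hn1 : n = 1
      · subst hn1
        rw [le_div_iff₀ hnQ]
        have hXs : shapley f' (⟨0, by omega⟩ : Fin (2*1-1)) = X := by
          rw [htotal, hX]
          norm_num
        have : (1:ℚ) ≤ X := by
          rw [← hXs]
          exact le_trans (by rw [hlam1]) hshap
        push_cast
        linarith
      · have hn2 : (2:ℚ) ≤ n := by
          have : 2 ≤ n := by omega
          exact_mod_cast this
        rw [le_div_iff₀ hnQ]
        rw [hlam1] at hX_ge
        linarith
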